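/- The epigraph of the Minkowski symmetral of a convex function equals the Minkowski symmetral of the epigraph: for ψ convex, proper, lower semicontinuous and coercive on ℝⁿ and H = u^⊥, epi(τ_H ψ) = ½ epi(ψ) + ½ R_{H×ℝ}(epi(ψ)). -/

import Mathlib

open RealInnerProductSpace Pointwise

/-- Reflection of a point about the hyperplane `u^⊥`. -/
noncomputable def reflHyp {n : ℕ} (u x : EuclideanSpace ℝ (Fin n)) :
    EuclideanSpace ℝ (Fin n) :=
  x - (2 * ⟪x, u⟫) • u

/-- Infimal convolution. -/
noncomputable def infConv {n : ℕ} (ψ φ : EuclideanSpace ℝ (Fin n) → EReal)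
    (x : EuclideanSpace ℝ (Fin n)) : EReal :=
  ⨅ y, ψ y + φ (x - y)

/-- Epi-multiplication. -/
noncomputable def epiMul {n : ℕ} (l : ℝ) (ψ : EuclideanSpace ℝ (Fin n) → EReal)
    (x : EuclideanSpace ℝ (Fin n)) : EReal :=
  ((l : EReal)) * ψ (l⁻¹ • x)

/-- The Minkowski symmetral of a convex function about `u^⊥`. -/
noncomputable def minkSymm {n : ℕ} (u : EuclideanSpace ℝ (Fin n))
    (ψ : EuclideanSpace ℝ (Fin n) → EReal) : EuclideanSpace ℝ (Fin n) → EReal :=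
  infConv (epiMul (1/2) ψ) (epiMul (1/2) (fun y => ψ (reflHyp u y)))

section AuxLemmas

lemma ereal_coe_two : ((2:ℝ):EReal) = 2 := by norm_cast

lemma ereal_two_pos : (0:EReal) < 2 := by
  rw [← ereal_coe_two]; exact_mod_cast two_pos

lemma ereal_two_ne_top : (2:EReal) ≠ ⊤ := by
  rw [← ereal_coe_two]; exact EReal.coe_ne_top _

lemma ereal_two_ne_bot : (2:EReal) ≠ ⊥ := by
  rw [← ereal_coe_two]; exact EReal.coe_ne_bot _

lemma ereal_two_ne_zero : (2:EReal) ≠ 0 := ereal_two_pos.ne'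

lemma ediv2_strictMono : StrictMono (fun a : EReal => a / 2) :=
  EReal.strictMono_div_right_of_pos ereal_two_pos ereal_two_ne_top

lemma ediv2_mono : Monotone (fun a : EReal => a / 2) :=
  EReal.monotone_div_right_of_nonneg ereal_two_pos.le

lemma ediv2_key (a : EReal) : a * 2 / 2 = a := by
  rw [← EReal.mul_div, EReal.div_self ereal_two_ne_bot ereal_two_ne_top ereal_two_ne_zero, mul_one]

lemma ediv2_ne_bot {a : EReal} (h : a ≠ ⊥) : a / 2 ≠ ⊥ := by
  intro hc
  apply h
  have : a / 2 = ⊥ / 2 := by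
    rw [hc, EReal.bot_div_of_pos_ne_top ereal_two_pos ereal_two_ne_top]
  exact ediv2_strictMono.injective this

lemma half_coe (r : ℝ) : ((r : EReal)) / 2 = ((r/2 : ℝ) : EReal) := by
  rw [EReal.coe_div, ereal_coe_two]

lemma lsc_comp_cont {X Y : Type*} [TopologicalSpace X] [TopologicalSpace Y]
    {f : Y → EReal} (hf : LowerSemicontinuous f) {g : X → Y} (hg : Continuous g) :
    LowerSemicontinuous fun x => f (g x) :=
  fun x b hb => hg.continuousAt.eventually (hf (g x) b hb)

lemma lsc_div2 {X : Type*} [TopologicalSpace X] {f : X → EReal}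
    (hf : LowerSemicontinuous f) : LowerSemicontinuous fun x => f x / 2 := by
  intro x b hb
  have h2 : b * 2 < f x := by
    have := ediv2_strictMono.lt_iff_lt (a := b * 2) (b := f x)
    simp only [ediv2_key] at this
    exact this.mp hb
  filter_upwards [hf x _ h2] with z hz
  calc b = b * 2 / 2 := (ediv2_key b).symm
    _ < f z / 2 := ediv2_strictMono hz

lemma lsc_min_on_compact {X : Type*} [TopologicalSpace X] [T2Space X] {s : Set X}
    (hs : IsCompact s) (hne : s.Nonempty) {f : X → EReal} (hf : LowerSemicontinuous f) :
    ∃ y₀ ∈ s, ∀ y ∈ s, f y₀ ≤ f y := by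
  set m := sInf (f '' s) with hm
  rcases eq_or_lt_of_le (le_top : m ≤ ⊤) with htop | hlt
  · obtain ⟨y₀, hy₀⟩ := hne
    refine ⟨y₀, hy₀, fun y hy => ?_⟩
    have : f y = ⊤ := sInf_eq_top.mp (hm ▸ htop) _ (Set.mem_image_of_mem f hy)
    rw [this]; exact le_top
  · haveI : Nonempty {b : EReal // m < b} := ⟨⟨⊤, hlt⟩⟩
    have hinter := IsCompact.nonempty_iInter_of_directed_nonempty_isCompact_isClosed
      (fun b : {b : EReal // m < b} => s ∩ f ⁻¹' Set.Iic b.1)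
      (fun b b' => ⟨⟨min b.1 b'.1, lt_min b.2 b'.2⟩,
        Set.inter_subset_inter_right s (Set.preimage_mono (Set.Iic_subset_Iic.2 (min_le_left _ _))),
        Set.inter_subset_inter_right s
          (Set.preimage_mono (Set.Iic_subset_Iic.2 (min_le_right _ _)))⟩)
      (fun b => by
        obtain ⟨a, ⟨y, hy, rfl⟩, ha⟩ := sInf_lt_iff.mp b.2
        exact ⟨y, hy, ha.le⟩)
      (fun b => hs.inter_right (hf.isClosed_preimage _))
      (fun b => hs.isClosed.inter (hf.isClosed_preimage _))
    obtain ⟨y₀, hy₀⟩ := hinter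
    simp only [Set.mem_iInter, Set.mem_inter_iff, Set.mem_preimage, Set.mem_Iic] at hy₀
    have hy₀s : y₀ ∈ s := (hy₀ ⟨⊤, hlt⟩).1
    have hle : f y₀ ≤ m := le_of_forall_gt_imp_ge_of_dense fun b hb => (hy₀ ⟨b, hb⟩).2
    exact ⟨y₀, hy₀s, fun y hy => hle.trans (sInf_le (Set.mem_image_of_mem f hy))⟩

lemma reflHyp_invol {n : ℕ} (u : EuclideanSpace ℝ (Fin n)) (hu : ‖u‖ = 1)
    (z : EuclideanSpace ℝ (Fin n)) : reflHyp u (reflHyp u z) = z := by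
  have huu : ⟪u, u⟫ = 1 := by
    rw [real_inner_self_eq_norm_mul_norm, hu]; norm_num
  unfold reflHyp
  rw [inner_sub_left, real_inner_smul_left, huu]
  module

lemma continuous_reflHyp {n : ℕ} (u : EuclideanSpace ℝ (Fin n)) :
    Continuous (reflHyp u) := by
  unfold reflHyp
  exact continuous_id.sub (by fun_prop)

lemma epiMul_half {n : ℕ} (ψ : EuclideanSpace ℝ (Fin n) → EReal)
    (x : EuclideanSpace ℝ (Fin n)) : epiMul (1/2) ψ x = ψ ((2:ℝ) • x) / 2 := by
  have h1 : ((1:ℝ)/2)⁻¹ = (2:ℝ) := by norm_num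
  have h2 : (((1:ℝ)/2 : ℝ) : EReal) = (2:EReal)⁻¹ := by
    rw [show (1/2 : ℝ) = (2:ℝ)⁻¹ by norm_num, EReal.coe_inv, ereal_coe_two]
  rw [epiMul, h1, h2, EReal.mul_comm]
  rfl

end AuxLemmas

theorem epi_minkSymm {n : ℕ} (u : EuclideanSpace ℝ (Fin n)) (hu : ‖u‖ = 1)
    (ψ : EuclideanSpace ℝ (Fin n) → EReal)
    (hconv : ∀ x y : EuclideanSpace ℝ (Fin n), ∀ a b : ℝ, 0 ≤ a → 0 ≤ b → a + b = 1 →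
      ψ (a • x + b • y) ≤ (a : EReal) * ψ x + (b : EReal) * ψ y)
    (hlsc : LowerSemicontinuous ψ)
    (hproper : ∃ x, ψ x ≠ ⊤) (hbot : ∀ x, ψ x ≠ ⊥)
    (hcoercive : ∀ M : ℝ, ∃ r : ℝ, ∀ x, r ≤ ‖x‖ → (M : EReal) ≤ ψ x) :
    {p : EuclideanSpace ℝ (Fin n) × ℝ | minkSymm u ψ p.1 ≤ (p.2 : EReal)} =
      (1/2 : ℝ) • {p : EuclideanSpace ℝ (Fin n) × ℝ | ψ p.1 ≤ (p.2 : EReal)} +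
        (1/2 : ℝ) • ((fun p : EuclideanSpace ℝ (Fin n) × ℝ => (reflHyp u p.1, p.2)) ''
          {p : EuclideanSpace ℝ (Fin n) × ℝ | ψ p.1 ≤ (p.2 : EReal)}) := by
  have hRR : ∀ z, reflHyp u (reflHyp u z) = z := reflHyp_invol u hu
  -- global lower bound for ψ
  obtain ⟨r0, hr0⟩ := hcoercive 0
  obtain ⟨c, hc0, hc⟩ : ∃ c : ℝ, c ≤ 0 ∧ ∀ z, (c : EReal) ≤ ψ z := by
    obtain ⟨zm, hzm, hzmin⟩ := lsc_min_on_compact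
      (isCompact_closedBall (0:EuclideanSpace ℝ (Fin n)) (max r0 0))
      ⟨0, Metric.mem_closedBall_self (le_max_right _ _)⟩ hlsc
    refine ⟨min (ψ zm).toReal 0, min_le_right _ _, fun z => ?_⟩
    by_cases hz : z ∈ Metric.closedBall (0:EuclideanSpace ℝ (Fin n)) (max r0 0)
    · refine le_trans ?_ (hzmin z hz)
      rcases eq_or_ne (ψ zm) ⊤ with h | h
      · rw [h]; exact le_top
      · calc ((min (ψ zm).toReal 0 : ℝ) : EReal) ≤ (((ψ zm).toReal : ℝ) : EReal) := by
              exact_mod_cast min_le_left _ _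
          _ = ψ zm := EReal.coe_toReal h (hbot zm)
    · have hz' : r0 ≤ ‖z‖ := by
        simp only [Metric.mem_closedBall, dist_zero_right, not_le] at hz
        exact le_trans (le_max_left _ _) hz.le
      calc ((min (ψ zm).toReal 0 : ℝ) : EReal) ≤ ((0:ℝ) : EReal) := by
            exact_mod_cast min_le_right _ _
        _ ≤ ψ z := by simpa using hr0 z hz'
  ext ⟨x, t⟩
  simp only [Set.mem_setOf_eq, Set.mem_add, Set.mem_smul_set, Set.mem_image]
  set f : EuclideanSpace ℝ (Fin n) → EReal :=
    fun y => ψ ((2:ℝ) • y) / 2 + ψ (reflHyp u ((2:ℝ) • x - (2:ℝ) • y)) / 2 with hf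
  have hminf : minkSymm u ψ x = ⨅ y, f y := by
    rw [hf]
    simp only [minkSymm, infConv, epiMul_half, smul_sub]
  constructor
  · intro h
    -- lower semicontinuity of f
    have hf_lsc : LowerSemicontinuous f := by
      rw [hf]
      refine LowerSemicontinuous.add' ?_ ?_ ?_
      · exact lsc_div2 (lsc_comp_cont hlsc (continuous_const_smul (2:ℝ)))
      · exact lsc_div2 (lsc_comp_cont hlsc
          ((continuous_reflHyp u).comp (continuous_const.sub (continuous_const_smul (2:ℝ)))))
      · intro y
        exact EReal.continuousAt_add (Or.inr (ediv2_ne_bot (hbot _)))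
          (Or.inl (ediv2_ne_bot (hbot _)))
    -- coercivity of f
    obtain ⟨r, hr⟩ := hcoercive (2*(t+1) - c)
    have hout : ∀ y : EuclideanSpace ℝ (Fin n), max (r/2) 0 ≤ ‖y‖ →
        ((t+1:ℝ):EReal) ≤ f y := by
      intro y hy
      have h1 : ((2*(t+1) - c : ℝ) : EReal) ≤ ψ ((2:ℝ) • y) := by
        apply hr
        rw [norm_smul, Real.norm_ofNat]
        have : r/2 ≤ ‖y‖ := le_trans (le_max_left _ _) hy
        linarith
      have h2 : (c:EReal) ≤ ψ (reflHyp u ((2:ℝ) • x - (2:ℝ) • y)) := hc _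
      calc ((t+1:ℝ):EReal) = ((2*(t+1)-c:ℝ):EReal)/2 + ((c:ℝ):EReal)/2 := by
            rw [half_coe, half_coe, ← EReal.coe_add]
            norm_cast
            ring
        _ ≤ f y := by
            rw [hf]
            exact add_le_add (ediv2_mono h1) (ediv2_mono h2)
    -- minimize f on a compact ball
    obtain ⟨y₀, hy₀B, hy₀min⟩ := lsc_min_on_compact
      (isCompact_closedBall (0:EuclideanSpace ℝ (Fin n)) (max (r/2) 0))
      ⟨0, Metric.mem_closedBall_self (le_max_right _ _)⟩ hf_lsc
    have hfy₀ : f y₀ ≤ (t : EReal) := by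
      by_contra hgt
      push_neg at hgt
      have hm : ∀ y, min (f y₀) ((t+1:ℝ):EReal) ≤ f y := by
        intro y
        by_cases hyB : y ∈ Metric.closedBall (0:EuclideanSpace ℝ (Fin n)) (max (r/2) 0)
        · exact le_trans (min_le_left _ _) (hy₀min y hyB)
        · refine le_trans (min_le_right _ _) (hout y ?_)
          simp only [Metric.mem_closedBall, dist_zero_right, not_le] at hyB
          exact hyB.le
      have h1 : (t:EReal) < min (f y₀) ((t+1:ℝ):EReal) :=
        lt_min hgt (by exact_mod_cast lt_add_one t)
      have h2 : min (f y₀) ((t+1:ℝ):EReal) ≤ (t:EReal) :=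
        le_trans (le_iInf hm) (by rw [← hminf]; exact h)
      exact absurd (h1.trans_le h2) (lt_irrefl _)
    -- extract real bounds
    simp only [hf] at hfy₀
    have hat : ψ ((2:ℝ) • y₀) ≠ ⊤ := by
      intro hA
      rw [hA, EReal.top_div_of_pos_ne_top ereal_two_pos ereal_two_ne_top,
        EReal.top_add_of_ne_bot (ediv2_ne_bot (hbot _))] at hfy₀
      exact (EReal.coe_ne_top t) (top_le_iff.mp hfy₀)
    have hbt : ψ (reflHyp u ((2:ℝ) • x - (2:ℝ) • y₀)) ≠ ⊤ := by
      intro hA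
      rw [hA, EReal.top_div_of_pos_ne_top ereal_two_pos ereal_two_ne_top,
        EReal.add_top_of_ne_bot (ediv2_ne_bot (hbot _))] at hfy₀
      exact (EReal.coe_ne_top t) (top_le_iff.mp hfy₀)
    obtain ⟨s, hs⟩ : ∃ s : ℝ, ψ ((2:ℝ) • y₀) = (s:EReal) :=
      ⟨_, (EReal.coe_toReal hat (hbot _)).symm⟩
    obtain ⟨b', hb'⟩ : ∃ v : ℝ, ψ (reflHyp u ((2:ℝ) • x - (2:ℝ) • y₀)) = (v:EReal) :=
      ⟨_, (EReal.coe_toReal hbt (hbot _)).symm⟩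
    rw [hs, hb', half_coe, half_coe, ← EReal.coe_add] at hfy₀
    have hreal : s/2 + b'/2 ≤ t := by exact_mod_cast hfy₀
    refine ⟨(1/2:ℝ) • (((2:ℝ) • y₀ : EuclideanSpace ℝ (Fin n)), s),
      ⟨((2:ℝ) • y₀, s), by simpa using le_of_eq hs, rfl⟩,
      (1/2:ℝ) • (((2:ℝ) • x - (2:ℝ) • y₀ : EuclideanSpace ℝ (Fin n)), 2*t - s),
      ⟨((2:ℝ) • x - (2:ℝ) • y₀, 2*t - s),
        ⟨(reflHyp u ((2:ℝ) • x - (2:ℝ) • y₀), 2*t - s), ?_, ?_⟩, rfl⟩, ?_⟩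
    · show ψ (reflHyp u ((2:ℝ) • x - (2:ℝ) • y₀)) ≤ ((2*t - s : ℝ) : EReal)
      rw [hb']
      exact_mod_cast by linarith
    · simp only [hRR]
    · have hfst : (1/2:ℝ) • ((2:ℝ) • y₀) + (1/2:ℝ) • ((2:ℝ) • x - (2:ℝ) • y₀) = x := by
        rw [smul_sub, smul_smul, smul_smul]
        norm_num
      have hsnd : (1/2:ℝ) • s + (1/2:ℝ) • (2*t - s) = t := by
        simp only [smul_eq_mul]; ring
      rw [Prod.smul_mk, Prod.smul_mk, Prod.mk_add_mk, hfst, hsnd]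
  · rintro ⟨p, ⟨⟨v, s⟩, hvs, rfl⟩, q, ⟨w, ⟨⟨z, t₂⟩, hz, rfl⟩, rfl⟩, hpq⟩
    simp only [Prod.smul_mk, Prod.mk_add_mk, Prod.mk.injEq] at hpq
    obtain ⟨hx, ht⟩ := hpq
    rw [hminf]
    refine le_trans (iInf_le _ ((1/2:ℝ) • v)) ?_
    have e1 : (2:ℝ) • ((1/2:ℝ) • v) = v := by rw [smul_smul]; norm_num
    have e2 : (2:ℝ) • x - (2:ℝ) • ((1/2:ℝ) • v) = reflHyp u z := by
      rw [← hx, smul_add, smul_smul, smul_smul]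
      norm_num
    simp only [hf]
    rw [e2, e1, hRR]
    calc ψ v / 2 + ψ z / 2 ≤ ((s:EReal))/2 + ((t₂:EReal))/2 := by
          simp only [Set.mem_setOf_eq] at hvs hz
          exact add_le_add (ediv2_mono hvs) (ediv2_mono hz)
      _ = ((s/2 + t₂/2 : ℝ) : EReal) := by rw [half_coe, half_coe, ← EReal.coe_add]
      _ ≤ (t : EReal) := by
          rw [← ht]
          simp only [smul_eq_mul]
          norm_cast
          linarith
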